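/- Let κ be an infinite cardinal and X a T1 topological space. The Wallman κ-bounded extension W_κ̄X is Urysohn if and only if X is strongly κ̄-normal. -/
import Mathlib


universe u

open Cardinal Set Topology

/-- `X` is `𝓕`-regular: any `F ∈ 𝓕` and point `x ∉ F` can be separated by disjoint open sets. -/
def FRegular (X : Type u) [TopologicalSpace X] (F : Set (Set X)) : Prop :=
  ∀ A ∈ F, ∀ x : X, x ∉ A → ∃ U V : Set X,
    IsOpen U ∧ IsOpen V ∧ A ⊆ U ∧ x ∈ V ∧ Disjoint U V

/-- `X` is strongly `𝓕`-regular: any `F ∈ 𝓕` and point `x ∉ F` can be separated by open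
sets with disjoint closures. -/
def StronglyFRegular (X : Type u) [TopologicalSpace X] (F : Set (Set X)) : Prop :=
  ∀ A ∈ F, ∀ x : X, x ∉ A → ∃ U V : Set X,
    IsOpen U ∧ IsOpen V ∧ A ⊆ U ∧ x ∈ V ∧ closure U ∩ closure V = ∅

/-- `X` is `𝓕`-normal: any two disjoint members of `𝓕` can be separated by disjoint open sets. -/
def FNormal (X : Type u) [TopologicalSpace X] (F : Set (Set X)) : Prop :=
  ∀ A ∈ F, ∀ B ∈ F, Disjoint A B → ∃ U V : Set X,
    IsOpen U ∧ IsOpen V ∧ A ⊆ U ∧ B ⊆ V ∧ Disjoint U V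

/-- `X` is strongly `𝓕`-normal: any two disjoint members of `𝓕` can be separated by
open sets with disjoint closures. -/
def StronglyFNormal (X : Type u) [TopologicalSpace X] (F : Set (Set X)) : Prop :=
  ∀ A ∈ F, ∀ B ∈ F, Disjoint A B → ∃ U V : Set X,
    IsOpen U ∧ IsOpen V ∧ A ⊆ U ∧ B ⊆ V ∧ closure U ∩ closure V = ∅

/-- `X` is totally `𝓕`-normal: any member of `𝓕` and any closed set disjoint from it can be
separated by disjoint open sets. -/
def TotallyFNormal (X : Type u) [TopologicalSpace X] (F : Set (Set X)) : Prop :=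
  ∀ A ∈ F, ∀ B : Set X, IsClosed B → Disjoint A B → ∃ U V : Set X,
    IsOpen U ∧ IsOpen V ∧ A ⊆ U ∧ B ⊆ V ∧ Disjoint U V

/-- The family `𝓕_κ(X)` of all closed subsets of `X` contained in the closure of some subset
of `X` of cardinality at most `κ`. -/
def FamilyKappa (κ : Cardinal.{u}) (X : Type u) [TopologicalSpace X] : Set (Set X) :=
  {F | IsClosed F ∧ ∃ C : Set X, #C ≤ κ ∧ F ⊆ closure C}

/-- A topological space is Urysohn if any two distinct points have open neighborhoods with
disjoint closures. -/
def UrysohnSpace (X : Type u) [TopologicalSpace X] : Prop :=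
  ∀ x y : X, x ≠ y → ∃ U V : Set X,
    IsOpen U ∧ IsOpen V ∧ x ∈ U ∧ y ∈ V ∧ closure U ∩ closure V = ∅

/-- A closed ultrafilter on a topological space `X`: a family of closed sets not containing `∅`,
closed under binary intersections, and containing every closed set that meets all its members. -/
structure ClosedUltrafilter (X : Type u) [TopologicalSpace X] : Type u where
  sets : Set (Set X)
  isClosed_of_mem : ∀ F ∈ sets, IsClosed F
  empty_not_mem : ∅ ∉ sets
  inter_mem : ∀ A ∈ sets, ∀ B ∈ sets, A ∩ B ∈ sets
  mem_of_forall_inter : ∀ F : Set X, IsClosed F → (∀ A ∈ sets, (F ∩ A).Nonempty) → F ∈ sets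

/-- The topology of the Wallman extension `wX`, generated by the sets
`⟨U⟩ = {𝓕 ∈ wX : ∃ F ∈ 𝓕, F ⊆ U}` for `U` open in `X`. -/
instance ClosedUltrafilter.instTopologicalSpace (X : Type u) [TopologicalSpace X] :
    TopologicalSpace (ClosedUltrafilter X) :=
  TopologicalSpace.generateFrom
    {S | ∃ U : Set X, IsOpen U ∧ S = {u : ClosedUltrafilter X | ∃ F ∈ u.sets, F ⊆ U}}

/-- The canonical map `j_X : X → wX` sending a point `x` to the principal closed ultrafilter
of all closed sets containing `x`. -/
def wallmanMap (X : Type u) [TopologicalSpace X] [T1Space X] (x : X) : ClosedUltrafilter X where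
  sets := {F | IsClosed F ∧ x ∈ F}
  isClosed_of_mem := fun _ hF => hF.1
  empty_not_mem := fun h => h.2
  inter_mem := fun A hA B hB => ⟨hA.1.inter hB.1, hA.2, hB.2⟩
  mem_of_forall_inter := fun F hF h => by
    obtain ⟨y, hyF, hyx⟩ := h {x} ⟨isClosed_singleton, rfl⟩
    exact ⟨hF, hyx ▸ hyF⟩

/-- The Wallman `κ`-bounded extension `W_κ̄X ⊆ wX`: the union of the closures (in `wX`) of the
images `j_X(C)` of subsets `C ⊆ X` of cardinality at most `κ`. -/
def WallmanKappa (κ : Cardinal.{u}) (X : Type u) [TopologicalSpace X] [T1Space X] :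
    Set (ClosedUltrafilter X) :=
  ⋃ C ∈ {C : Set X | #C ≤ κ}, closure (wallmanMap X '' C)


namespace ClosedUltrafilter

variable {X : Type u} [TopologicalSpace X]

theorem ext' {u v : ClosedUltrafilter X} (h : u.sets = v.sets) : u = v := by
  cases u; cases v; simpa using h

theorem nonempty_of_mem {u : ClosedUltrafilter X} {A : Set X} (hA : A ∈ u.sets) : A.Nonempty := by
  rcases A.eq_empty_or_nonempty with rfl | h
  · exact absurd hA u.empty_not_mem
  · exact h

theorem superset_mem {u : ClosedUltrafilter X} {A B : Set X} (hA : A ∈ u.sets) (hB : IsClosed B)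
    (hAB : A ⊆ B) : B ∈ u.sets :=
  u.mem_of_forall_inter B hB fun C hC =>
    (nonempty_of_mem (u.inter_mem A hA C hC)).mono (inter_subset_inter_left _ hAB)

theorem univ_mem (u : ClosedUltrafilter X) : Set.univ ∈ u.sets :=
  u.mem_of_forall_inter _ isClosed_univ fun A hA => by
    simpa using nonempty_of_mem hA

theorem dichotomy (u : ClosedUltrafilter X) {F : Set X} (hF : IsClosed F) (h : F ∉ u.sets) :
    ∃ A ∈ u.sets, A ∩ F = ∅ := by
  by_contra hc
  push_neg at hc
  exact h (u.mem_of_forall_inter F hF fun A hA => by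
    rw [inter_comm]
    exact hc A hA)

theorem finset_biInter_mem {ι : Type*} (v : ClosedUltrafilter X) (t : Finset ι) (f : ι → Set X)
    (h : ∀ i ∈ t, f i ∈ v.sets) : (⋂ i ∈ t, f i) ∈ v.sets := by
  classical
  induction t using Finset.induction_on with
  | empty => simpa using v.univ_mem
  | @insert a s ha ih =>
    have : (⋂ i ∈ insert a s, f i) = f a ∩ ⋂ i ∈ s, f i := by
      ext x; simp [Finset.mem_insert, or_imp, forall_and]
    rw [this]
    exact v.inter_mem _ (h a (Finset.mem_insert_self a s))
      _ (ih fun i hi => h i (Finset.mem_insert_of_mem hi))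

/-- The basic open set `⟨U⟩` of the Wallman extension. -/
def basic (U : Set X) : Set (ClosedUltrafilter X) := {u : ClosedUltrafilter X | ∃ F ∈ u.sets, F ⊆ U}

theorem isOpen_basic {U : Set X} (hU : IsOpen U) : IsOpen (basic U) :=
  TopologicalSpace.GenerateOpen.basic _ ⟨U, hU, rfl⟩

theorem mem_basic_compl {u : ClosedUltrafilter X} {F : Set X} (hF : IsClosed F) :
    u ∈ basic Fᶜ ↔ F ∉ u.sets := by
  constructor
  · rintro ⟨G, hG, hGF⟩ hFu
    obtain ⟨x, hxG, hxF⟩ := nonempty_of_mem (u.inter_mem G hG F hFu)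
    exact hGF hxG hxF
  · intro h
    obtain ⟨A, hA, hAF⟩ := u.dichotomy hF h
    exact ⟨A, hA, (disjoint_iff_inter_eq_empty.2 hAF).subset_compl_right⟩

theorem isBasis :
    TopologicalSpace.IsTopologicalBasis
      {S : Set (ClosedUltrafilter X) | ∃ U : Set X, IsOpen U ∧ S = basic U} where
  exists_subset_inter := by
    rintro t₁ ⟨U, hU, rfl⟩ t₂ ⟨V, hV, rfl⟩ u ⟨⟨F, hF, hFU⟩, ⟨G, hG, hGV⟩⟩
    refine ⟨basic (U ∩ V), ⟨U ∩ V, hU.inter hV, rfl⟩,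
      ⟨F ∩ G, u.inter_mem F hF G hG, fun x hx => ⟨hFU hx.1, hGV hx.2⟩⟩, ?_⟩
    rintro v ⟨H, hH, hHUV⟩
    exact ⟨⟨H, hH, fun x hx => (hHUV hx).1⟩, ⟨H, hH, fun x hx => (hHUV hx).2⟩⟩
  sUnion_eq := eq_univ_of_forall fun u =>
    ⟨basic Set.univ, ⟨Set.univ, isOpen_univ, rfl⟩, ⟨Set.univ, u.univ_mem, subset_rfl⟩⟩
  eq_generateFrom := rfl

theorem mem_of_mem_closure_basic {u : ClosedUltrafilter X} {U : Set X}
    (h : u ∈ closure (basic U)) : closure U ∈ u.sets := by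
  by_contra hc
  obtain ⟨v, hv1, hv2⟩ := (mem_closure_iff.1 h) _ (isOpen_basic isClosed_closure.isOpen_compl)
    ((mem_basic_compl isClosed_closure).2 hc)
  obtain ⟨F, hF, hFc⟩ := hv1
  obtain ⟨G, hG, hGU⟩ := hv2
  obtain ⟨x, hxF, hxG⟩ := nonempty_of_mem (v.inter_mem F hF G hG)
  exact hFc hxF (subset_closure (hGU hxG))

theorem wallmanMap_mem_basic [T1Space X] {x : X} {U : Set X} :
    wallmanMap X x ∈ basic U ↔ x ∈ U := by
  constructor
  · rintro ⟨F, ⟨-, hxF⟩, hFU⟩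
    exact hFU hxF
  · intro hx
    exact ⟨{x}, ⟨isClosed_singleton, rfl⟩, singleton_subset_iff.2 hx⟩

theorem mem_closure_image [T1Space X] {u : ClosedUltrafilter X} {C : Set X} :
    u ∈ closure (wallmanMap X '' C) ↔ closure C ∈ u.sets := by
  rw [isBasis.mem_closure_iff]
  constructor
  · intro h
    by_contra hc
    obtain ⟨w, hw1, hw2⟩ := h (basic (closure C)ᶜ) ⟨_, isClosed_closure.isOpen_compl, rfl⟩
      ((mem_basic_compl isClosed_closure).2 hc)
    obtain ⟨y, hyC, rfl⟩ := hw2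
    exact ((mem_basic_compl isClosed_closure).1 hw1)
      ⟨isClosed_closure, subset_closure hyC⟩
  · rintro hCl o ⟨U, hU, rfl⟩ ⟨F, hF, hFU⟩
    have h1 : (U ∩ closure C).Nonempty :=
      (nonempty_of_mem (u.inter_mem F hF _ hCl)).mono (inter_subset_inter_left _ hFU)
    have h2 : (U ∩ C).Nonempty := by
      rw [← closure_nonempty_iff]
      exact h1.mono hU.inter_closure
    obtain ⟨x, hxU, hxC⟩ := h2
    exact ⟨wallmanMap X x, wallmanMap_mem_basic.2 hxU, ⟨x, hxC, rfl⟩⟩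

theorem mem_wallmanKappa [T1Space X] {κ : Cardinal.{u}} {u : ClosedUltrafilter X} :
    u ∈ WallmanKappa κ X ↔ ∃ C : Set X, #C ≤ κ ∧ closure C ∈ u.sets := by
  simp only [WallmanKappa, mem_iUnion, mem_setOf_eq, exists_prop]
  exact exists_congr fun C => and_congr_right fun _ => mem_closure_image

theorem continuous_wallmanMap [T1Space X] : Continuous (wallmanMap X) := by
  rw [isBasis.eq_generateFrom, continuous_generateFrom_iff]
  rintro S ⟨U, hU, rfl⟩
  have : wallmanMap X ⁻¹' basic U = U := Set.ext fun x => wallmanMap_mem_basic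
  rw [this]
  exact hU

theorem exists_le_ultrafilter {S : Set (Set X)} (hcl : ∀ F ∈ S, IsClosed F)
    (hem : ∅ ∉ S) (hint : ∀ A ∈ S, ∀ B ∈ S, A ∩ B ∈ S) (hne : S.Nonempty) :
    ∃ u : ClosedUltrafilter X, S ⊆ u.sets := by
  set P : Set (Set (Set X)) :=
    {T | (∀ F ∈ T, IsClosed F) ∧ ∅ ∉ T ∧ ∀ A ∈ T, ∀ B ∈ T, A ∩ B ∈ T} with hP
  have hzorn : ∀ c ⊆ P, IsChain (· ⊆ ·) c → c.Nonempty →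
      ∃ ub ∈ P, ∀ s ∈ c, s ⊆ ub := by
    intro c hcP hchain hcne
    refine ⟨⋃₀ c, ⟨?_, ?_, ?_⟩, fun s hs => subset_sUnion_of_mem hs⟩
    · rintro F ⟨T, hT, hFT⟩
      exact (hcP hT).1 F hFT
    · rintro ⟨T, hT, hT0⟩
      exact (hcP hT).2.1 hT0
    · rintro A ⟨T₁, hT₁, hA⟩ B ⟨T₂, hT₂, hB⟩
      rcases hchain.total hT₁ hT₂ with h | h
      · exact ⟨T₂, hT₂, (hcP hT₂).2.2 A (h hA) B hB⟩
      · exact ⟨T₁, hT₁, (hcP hT₁).2.2 A hA B (h hB)⟩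
  obtain ⟨m, hSm, hmax⟩ := zorn_subset_nonempty P hzorn S ⟨hcl, hem, hint⟩
  · obtain ⟨hmcl, hmem, hmint⟩ := hmax.1
    refine ⟨⟨m, hmcl, hmem, hmint, ?_⟩, hSm⟩
    intro F hFcl hFmeet
    set m' : Set (Set X) := {G | IsClosed G ∧ ∃ A ∈ m, F ∩ A ⊆ G} with hm'
    have hmm' : m ⊆ m' := fun A hA => ⟨hmcl A hA, A, hA, inter_subset_right⟩
    have hm'P : m' ∈ P := by
      refine ⟨fun G hG => hG.1, ?_, ?_⟩
      · rintro ⟨-, A, hA, hFA⟩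
        exact (hFmeet A hA).ne_empty (subset_empty_iff.1 hFA)
      · rintro G₁ ⟨h1, A₁, hA₁, hFA₁⟩ G₂ ⟨h2, A₂, hA₂, hFA₂⟩
        exact ⟨h1.inter h2, A₁ ∩ A₂, hmint A₁ hA₁ A₂ hA₂,
          fun x hx => ⟨hFA₁ ⟨hx.1, hx.2.1⟩, hFA₂ ⟨hx.1, hx.2.2⟩⟩⟩
    have hsub : m' ⊆ m := hmax.2 hm'P hmm'
    obtain ⟨A₀, hA₀⟩ := hne
    exact hsub ⟨hFcl, A₀, hSm hA₀, inter_subset_left⟩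

theorem isCompact_setOf_mem_sets (A : Set X) :
    IsCompact {u : ClosedUltrafilter X | A ∈ u.sets} := by
  classical
  set K := {u : ClosedUltrafilter X | A ∈ u.sets} with hK
  apply isCompact_of_finite_subcover
  intro ι U hUo hcov
  by_contra hfin
  push_neg at hfin
  have hKne : K.Nonempty := by
    by_contra h
    rw [not_nonempty_iff_eq_empty] at h
    exact hfin ∅ (by simp [h])
  have hAcl : IsClosed A := by
    obtain ⟨u₀, hu₀⟩ := hKne
    exact u₀.isClosed_of_mem A hu₀
  have choice : ∀ u : K, ∃ (Wi : Set X × ι), IsOpen Wi.1 ∧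
      (u : ClosedUltrafilter X) ∈ basic Wi.1 ∧ basic Wi.1 ⊆ U Wi.2 := by
    intro u
    obtain ⟨i, hi⟩ := mem_iUnion.1 (hcov u.2)
    obtain ⟨S, ⟨Wu, hWo, rfl⟩, huS, hSU⟩ := isBasis.exists_subset_of_mem_open hi (hUo i)
    exact ⟨(Wu, i), hWo, huS, hSU⟩
  choose Wi hWo hWmem hWsub using choice
  set W : K → Set X := fun u => (Wi u).1 with hWdef
  set idx : K → ι := fun u => (Wi u).2 with hidxdef
  have key : ∀ t : Finset K, ∃ v : ClosedUltrafilter X,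
      v ∈ K ∧ (A ∩ ⋂ u ∈ t, (W u)ᶜ) ∈ v.sets := by
    intro t
    obtain ⟨v, hvK, hvn⟩ := Set.not_subset.1 (hfin (t.image idx))
    refine ⟨v, hvK, v.inter_mem A hvK _ (v.finset_biInter_mem t _ ?_)⟩
    intro u hu
    have hnU : v ∉ U (idx u) := fun h =>
      hvn (mem_biUnion (Finset.mem_image_of_mem idx hu) h)
    have hvb : v ∉ basic (W u) := fun h => hnU (hWsub u h)
    by_contra hc
    obtain ⟨B, hB, hBW⟩ := v.dichotomy (hWo u).isClosed_compl hc
    refine hvb ⟨B, hB, fun x hx => ?_⟩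
    by_contra hxW
    have : x ∈ B ∩ (W u)ᶜ := ⟨hx, hxW⟩
    rw [hBW] at this
    exact this
  set G : Set (Set X) := Set.range (fun t : Finset K => A ∩ ⋂ u ∈ t, (W u)ᶜ) with hG
  have hGcl : ∀ F ∈ G, IsClosed F := by
    rintro F ⟨t, rfl⟩
    exact hAcl.inter (isClosed_biInter fun u _ => (hWo u).isClosed_compl)
  have hGem : ∅ ∉ G := by
    rintro ⟨t, ht⟩
    obtain ⟨v, -, hv⟩ := key t
    simp only at ht
    rw [ht] at hv
    exact v.empty_not_mem hv
  have hGint : ∀ F₁ ∈ G, ∀ F₂ ∈ G, F₁ ∩ F₂ ∈ G := by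
    rintro F₁ ⟨t₁, rfl⟩ F₂ ⟨t₂, rfl⟩
    refine ⟨t₁ ∪ t₂, ?_⟩
    simp only
    ext x
    simp only [Set.mem_inter_iff, Set.mem_iInter, Finset.mem_union]
    constructor
    · rintro ⟨hA, h⟩
      exact ⟨⟨hA, fun u hu => h u (Or.inl hu)⟩, ⟨hA, fun u hu => h u (Or.inr hu)⟩⟩
    · rintro ⟨⟨hA, h1⟩, ⟨-, h2⟩⟩
      exact ⟨hA, fun u hu => hu.elim (h1 u) (h2 u)⟩
  have hGne : G.Nonempty := ⟨A ∩ ⋂ u ∈ (∅ : Finset K), (W u)ᶜ, ∅, rfl⟩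
  obtain ⟨w, hw⟩ := exists_le_ultrafilter hGcl hGem hGint hGne
  · have hAw : A ∈ w.sets := by
      have h0 : (A ∩ ⋂ u ∈ (∅ : Finset K), (W u)ᶜ) ∈ w.sets := hw ⟨∅, rfl⟩
      simpa using h0
    set wK : K := ⟨w, hAw⟩ with hwK
    obtain ⟨F, hF, hFW⟩ := hWmem wK
    have hWc : (W wK)ᶜ ∈ w.sets := by
      have h1 : (A ∩ ⋂ u ∈ ({wK} : Finset K), (W u)ᶜ) ∈ w.sets := hw ⟨{wK}, rfl⟩
      refine superset_mem h1 (hWo wK).isClosed_compl ?_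
      intro x hx
      have := hx.2
      simpa using this
    obtain ⟨x, hxF, hxW⟩ := nonempty_of_mem (w.inter_mem F hF _ hWc)
    exact hxW (hFW hxF)

end ClosedUltrafilter

open ClosedUltrafilter

theorem urysohnSepPoint {Y : Type*} [TopologicalSpace Y] (hY : UrysohnSpace Y)
    {L : Set Y} (hL : IsCompact L) {x : Y} (hx : x ∉ L) :
    ∃ U V : Set Y, IsOpen U ∧ IsOpen V ∧ x ∈ U ∧ L ⊆ V ∧ closure U ∩ closure V = ∅ := by
  classical
  have hch : ∀ y : L, ∃ UV : Set Y × Set Y, IsOpen UV.1 ∧ IsOpen UV.2 ∧ x ∈ UV.1 ∧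
      (y : Y) ∈ UV.2 ∧ closure UV.1 ∩ closure UV.2 = ∅ := by
    intro y
    obtain ⟨U, V, h1, h2, h3, h4, h5⟩ := hY x y (fun h => hx (h ▸ y.2))
    exact ⟨(U, V), h1, h2, h3, h4, h5⟩
  choose f h1 h2 h3 h4 h5 using hch
  obtain ⟨t, ht⟩ := hL.elim_finite_subcover (fun y : L => (f y).2) (fun y => h2 y)
    (fun z hz => mem_iUnion.2 ⟨⟨z, hz⟩, h4 _⟩)
  refine ⟨⋂ y ∈ t, (f y).1, ⋃ y ∈ t, (f y).2, isOpen_biInter_finset (fun y _ => h1 y),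
    isOpen_biUnion (fun y _ => h2 y), mem_iInter₂.2 (fun y _ => h3 y), ht, ?_⟩
  rw [eq_empty_iff_forall_notMem]
  rintro z ⟨hzU, hzV⟩
  rw [Finset.closure_biUnion] at hzV
  obtain ⟨y, hyt, hzy⟩ := mem_iUnion₂.1 hzV
  have hzU' : z ∈ closure (f y).1 := closure_mono (iInter₂_subset y hyt) hzU
  have h5y := h5 y
  rw [eq_empty_iff_forall_notMem] at h5y
  exact h5y z ⟨hzU', hzy⟩

theorem urysohnSepCompact {Y : Type*} [TopologicalSpace Y] (hY : UrysohnSpace Y)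
    {K L : Set Y} (hK : IsCompact K) (hL : IsCompact L) (hd : Disjoint K L) :
    ∃ U V : Set Y, IsOpen U ∧ IsOpen V ∧ K ⊆ U ∧ L ⊆ V ∧ closure U ∩ closure V = ∅ := by
  classical
  have hch : ∀ y : K, ∃ UV : Set Y × Set Y, IsOpen UV.1 ∧ IsOpen UV.2 ∧ (y : Y) ∈ UV.1 ∧
      L ⊆ UV.2 ∧ closure UV.1 ∩ closure UV.2 = ∅ := by
    intro y
    obtain ⟨U, V, h1, h2, h3, h4, h5⟩ := urysohnSepPoint hY hL (disjoint_left.1 hd y.2)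
    exact ⟨(U, V), h1, h2, h3, h4, h5⟩
  choose f h1 h2 h3 h4 h5 using hch
  obtain ⟨t, ht⟩ := hK.elim_finite_subcover (fun y : K => (f y).1) (fun y => h1 y)
    (fun z hz => mem_iUnion.2 ⟨⟨z, hz⟩, h3 _⟩)
  refine ⟨⋃ y ∈ t, (f y).1, ⋂ y ∈ t, (f y).2, isOpen_biUnion (fun y _ => h1 y),
    isOpen_biInter_finset (fun y _ => h2 y), ht,
    fun z hz => mem_iInter₂.2 (fun y _ => h4 y hz), ?_⟩
  rw [eq_empty_iff_forall_notMem]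
  rintro z ⟨hzU, hzV⟩
  rw [Finset.closure_biUnion] at hzU
  obtain ⟨y, hyt, hzy⟩ := mem_iUnion₂.1 hzU
  have hzV' : z ∈ closure (f y).2 := closure_mono (iInter₂_subset y hyt) hzV
  have h5y := h5 y
  rw [eq_empty_iff_forall_notMem] at h5y
  exact h5y z ⟨hzy, hzV'⟩

section Main

variable {X : Type u} [TopologicalSpace X] [T1Space X] {κ : Cardinal.{u}}

theorem urysohn_glue {U V : Set X} (hUo : IsOpen U) (hVo : IsOpen V)
    (hUV : closure U ∩ closure V = ∅) {x y : ↥(WallmanKappa κ X)}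
    (hx : (x : ClosedUltrafilter X) ∈ basic U) (hy : (y : ClosedUltrafilter X) ∈ basic V) :
    ∃ S T : Set ↥(WallmanKappa κ X), IsOpen S ∧ IsOpen T ∧ x ∈ S ∧ y ∈ T ∧
      closure S ∩ closure T = ∅ := by
  refine ⟨Subtype.val ⁻¹' basic U, Subtype.val ⁻¹' basic V,
    (isOpen_basic hUo).preimage continuous_subtype_val,
    (isOpen_basic hVo).preimage continuous_subtype_val, hx, hy, ?_⟩
  rw [eq_empty_iff_forall_notMem]
  rintro z ⟨hz1, hz2⟩
  have h1 : closure U ∈ (z : ClosedUltrafilter X).sets :=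
    mem_of_mem_closure_basic (continuous_subtype_val.closure_preimage_subset _ hz1)
  have h2 : closure V ∈ (z : ClosedUltrafilter X).sets :=
    mem_of_mem_closure_basic (continuous_subtype_val.closure_preimage_subset _ hz2)
  have h3 := (z : ClosedUltrafilter X).inter_mem _ h1 _ h2
  rw [hUV] at h3
  exact (z : ClosedUltrafilter X).empty_not_mem h3

theorem sep_aux (hN : StronglyFNormal X (FamilyKappa κ X))
    {x y : ClosedUltrafilter X} (hxW : x ∈ WallmanKappa κ X) (hyW : y ∈ WallmanKappa κ X)
    {F : Set X} (hFx : F ∈ x.sets) (hFy : F ∉ y.sets) :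
    ∃ U V : Set X, IsOpen U ∧ IsOpen V ∧ x ∈ basic U ∧ y ∈ basic V ∧
      closure U ∩ closure V = ∅ := by
  obtain ⟨B, hB, hBF⟩ := y.dichotomy (x.isClosed_of_mem F hFx) hFy
  obtain ⟨C, hCκ, hCx⟩ := mem_wallmanKappa.1 hxW
  obtain ⟨D, hDκ, hDy⟩ := mem_wallmanKappa.1 hyW
  have hA'x : F ∩ closure C ∈ x.sets := x.inter_mem _ hFx _ hCx
  have hB'y : B ∩ closure D ∈ y.sets := y.inter_mem _ hB _ hDy
  have hd : Disjoint (F ∩ closure C) (B ∩ closure D) := by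
    rw [Set.disjoint_iff_inter_eq_empty, eq_empty_iff_forall_notMem]
    rintro z ⟨⟨hzF, -⟩, ⟨hzB, -⟩⟩
    have : z ∈ B ∩ F := ⟨hzB, hzF⟩
    rw [hBF] at this
    exact this
  obtain ⟨U, V, hUo, hVo, hAU, hBV, hUV⟩ := hN (F ∩ closure C)
    ⟨x.isClosed_of_mem _ hA'x, C, hCκ, fun z hz => hz.2⟩ (B ∩ closure D)
    ⟨y.isClosed_of_mem _ hB'y, D, hDκ, fun z hz => hz.2⟩ hd
  exact ⟨U, V, hUo, hVo, ⟨_, hA'x, hAU⟩, ⟨_, hB'y, hBV⟩, hUV⟩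

end Main

/-- For an infinite cardinal `κ` and a `T₁`-space `X`, the Wallman `κ`-bounded extension
`W_κ̄X` is Urysohn if and only if `X` is strongly `κ̄`-normal. -/
theorem urysohn_wallmanKappa_iff_stronglyFNormal {X : Type u} [TopologicalSpace X] [T1Space X]
    (κ : Cardinal.{u}) (hκ : ℵ₀ ≤ κ) :
    UrysohnSpace (WallmanKappa κ X) ↔ StronglyFNormal X (FamilyKappa κ X) := by
  constructor
  · -- Urysohn → strongly κ̄-normal
    intro hU A hA B hB hAB
    obtain ⟨hAcl, C, hCκ, hACl⟩ := hA
    obtain ⟨hBcl, D, hDκ, hBDl⟩ := hB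
    set KA : Set ↥(WallmanKappa κ X) := Subtype.val ⁻¹' {u : ClosedUltrafilter X | A ∈ u.sets}
      with hKA
    set KB : Set ↥(WallmanKappa κ X) := Subtype.val ⁻¹' {u : ClosedUltrafilter X | B ∈ u.sets}
      with hKB
    have hsub : ∀ (E G : Set X), #G ≤ κ → E ⊆ closure G →
        {u : ClosedUltrafilter X | E ∈ u.sets} ⊆ WallmanKappa κ X := by
      intro E G hG hE u hu
      exact mem_wallmanKappa.2 ⟨G, hG, superset_mem hu isClosed_closure hE⟩
    have hcptA : IsCompact KA := by
      rw [Subtype.isCompact_iff]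
      have himg : Subtype.val '' KA = {u : ClosedUltrafilter X | A ∈ u.sets} := by
        rw [hKA, Subtype.image_preimage_coe]
        exact inter_eq_self_of_subset_right (hsub A C hCκ hACl)
      rw [himg]
      exact isCompact_setOf_mem_sets A
    have hcptB : IsCompact KB := by
      rw [Subtype.isCompact_iff]
      have himg : Subtype.val '' KB = {u : ClosedUltrafilter X | B ∈ u.sets} := by
        rw [hKB, Subtype.image_preimage_coe]
        exact inter_eq_self_of_subset_right (hsub B D hDκ hBDl)
      rw [himg]
      exact isCompact_setOf_mem_sets B
    have hdisj : Disjoint KA KB := by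
      rw [Set.disjoint_left]
      intro z hz1 hz2
      have h3 := (z : ClosedUltrafilter X).inter_mem _ hz1 _ hz2
      rw [Set.disjoint_iff_inter_eq_empty.1 hAB] at h3
      exact (z : ClosedUltrafilter X).empty_not_mem h3
    obtain ⟨S, T, hSo, hTo, hKS, hKT, hST⟩ := urysohnSepCompact hU hcptA hcptB hdisj
    have hjW : ∀ x : X, wallmanMap X x ∈ WallmanKappa κ X := by
      intro x
      refine mem_wallmanKappa.2 ⟨{x}, ?_, isClosed_closure, subset_closure rfl⟩
      rw [Cardinal.mk_singleton]
      exact Cardinal.one_lt_aleph0.le.trans hκ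
    set jW : X → ↥(WallmanKappa κ X) := fun x => ⟨wallmanMap X x, hjW x⟩ with hjWdef
    have hjWc : Continuous jW := continuous_wallmanMap.subtype_mk hjW
    refine ⟨jW ⁻¹' S, jW ⁻¹' T, hSo.preimage hjWc, hTo.preimage hjWc, ?_, ?_, ?_⟩
    · intro x hx
      exact hKS (show A ∈ (wallmanMap X x).sets from ⟨hAcl, hx⟩)
    · intro x hx
      exact hKT (show B ∈ (wallmanMap X x).sets from ⟨hBcl, hx⟩)
    · rw [eq_empty_iff_forall_notMem]
      rintro z ⟨hz1, hz2⟩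
      have h1 : jW z ∈ closure S := hjWc.closure_preimage_subset _ hz1
      have h2 : jW z ∈ closure T := hjWc.closure_preimage_subset _ hz2
      have : jW z ∈ closure S ∩ closure T := ⟨h1, h2⟩
      rw [hST] at this
      exact this
  · -- strongly κ̄-normal → Urysohn
    intro hN x y hxy
    have hne : ∃ F : Set X, (F ∈ (x : ClosedUltrafilter X).sets ∧
        F ∉ (y : ClosedUltrafilter X).sets) ∨
        (F ∈ (y : ClosedUltrafilter X).sets ∧ F ∉ (x : ClosedUltrafilter X).sets) := by
      by_contra h
      push_neg at h
      exact hxy (Subtype.ext (ext' (Set.ext fun F => ⟨fun hF => (h F).1 hF, fun hF => (h F).2 hF⟩)))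
    obtain ⟨F, hF | hF⟩ := hne
    · obtain ⟨U, V, hUo, hVo, hxU, hyV, hUV⟩ := sep_aux hN x.2 y.2 hF.1 hF.2
      exact urysohn_glue hUo hVo hUV hxU hyV
    · obtain ⟨U, V, hUo, hVo, hyU, hxV, hUV⟩ := sep_aux hN y.2 x.2 hF.1 hF.2
      refine urysohn_glue hVo hUo ?_ hxV hyU
      rw [Set.inter_comm]
      exact hUV
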